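/- Let q be a prime power with q ≡ 1 (mod 4). The adjacency matrix A of the Paley graph on F_q satisfies A² = ((q−1)/4)·(J + I) − A, where J is the all-ones matrix and I the identity. -/

import Mathlib

open Matrix Finset
open scoped Classical

lemma paley_key_sum (F : Type*) [Field F] [Fintype F] [DecidableEq F]
    (hF : ringChar F ≠ 2) (hneg : quadraticChar F (-1) = 1) (c : F) :
    ∑ x : F, quadraticChar F x * quadraticChar F (c - x)
      = if c = 0 then (Fintype.card F : ℤ) - 1 else -1 := by
  rcases eq_or_ne c 0 with rfl | hc
  · simp only [if_pos rfl]
    have h1 : ∀ x : F, quadraticChar F x * quadraticChar F (0 - x)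
        = 1 - (if x = 0 then 1 else 0) := by
      intro x
      rcases eq_or_ne x 0 with rfl | hx
      · simp
      · have : (0 : F) - x = -1 * x := by ring
        rw [this, _root_.map_mul, hneg, one_mul, if_neg hx, ← pow_two]
        rw [quadraticChar_sq_one hx]; ring
    rw [Finset.sum_congr rfl fun x _ => h1 x, Finset.sum_sub_distrib]
    simp [Finset.card_univ]
  · rw [if_neg hc]
    have h0 : ∑ x : F, quadraticChar F x * quadraticChar F (c - x)
        = ∑ x ∈ Finset.univ.erase (0 : F),
            quadraticChar F x * quadraticChar F (c - x) := by
      rw [Finset.sum_erase]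
      simp
    rw [h0]
    have h1 : ∀ x ∈ Finset.univ.erase (0 : F),
        quadraticChar F x * quadraticChar F (c - x)
          = quadraticChar F (c * x⁻¹ - 1) := by
      intro x hx
      have hx0 : x ≠ 0 := Finset.ne_of_mem_erase hx
      have : c - x = x * (c * x⁻¹ - 1) := by field_simp
      rw [this, _root_.map_mul, ← mul_assoc, ← pow_two, quadraticChar_sq_one hx0, one_mul]
    rw [Finset.sum_congr rfl h1]
    have h2 : ∑ x ∈ Finset.univ.erase (0 : F), quadraticChar F (c * x⁻¹ - 1)
        = ∑ y ∈ Finset.univ.erase (-1 : F), quadraticChar F y := by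
      refine Finset.sum_nbij' (fun x => c * x⁻¹ - 1) (fun y => c * (y + 1)⁻¹) ?_ ?_ ?_ ?_ ?_
      · intro x hx
        have hx0 : x ≠ 0 := Finset.ne_of_mem_erase hx
        simp only [Finset.mem_erase, Finset.mem_univ, and_true]
        intro h
        have : c * x⁻¹ = 0 := by linear_combination h
        rcases mul_eq_zero.mp this with h' | h'
        · exact hc h'
        · exact hx0 (inv_eq_zero.mp h')
      · intro y hy
        have hy1 : y ≠ -1 := Finset.ne_of_mem_erase hy
        have hy1' : y + 1 ≠ 0 := fun h => hy1 (by linear_combination h)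
        simp only [Finset.mem_erase, Finset.mem_univ, and_true]
        exact mul_ne_zero hc (inv_ne_zero hy1')
      · intro x hx
        have hx0 : x ≠ 0 := Finset.ne_of_mem_erase hx
        field_simp
        rw [sub_add_cancel, div_self hc]
      · intro y hy
        have hy1 : y ≠ -1 := Finset.ne_of_mem_erase hy
        have hy1' : y + 1 ≠ 0 := fun h => hy1 (by linear_combination h)
        field_simp
        ring
      · intro x hx; rfl
    rw [h2]
    have h3 : ∑ y ∈ Finset.univ.erase (-1 : F), quadraticChar F y
        = (∑ y : F, quadraticChar F y) - quadraticChar F (-1) := by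
      rw [Finset.sum_erase_eq_sub (Finset.mem_univ _)]
    rw [h3, quadraticChar_sum_zero hF, hneg]; ring

/-- For the Paley graph on a finite field `F` of order `q ≡ 1 (mod 4)`, with
adjacency matrix `A` (where `k ∼ l` iff `k − l` is a nonzero square), one has
`A² = ((q−1)/4)·(J + I) − A`. -/
theorem paley_adjacency_sq (F : Type*) [Field F] [Fintype F] [DecidableEq F]
    (hq : Fintype.card F % 4 = 1)
    (A : Matrix F F ℝ)
    (hA : A = Matrix.of fun k l : F => if k ≠ l ∧ IsSquare (k - l) then (1 : ℝ) else 0) :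
    A ^ 2 = (((Fintype.card F : ℝ) - 1) / 4) •
        (Matrix.of (fun _ _ : F => (1 : ℝ)) + (1 : Matrix F F ℝ)) - A := by
  have hF : ringChar F ≠ 2 := by
    intro h
    have := FiniteField.even_card_iff_char_two.mp h
    omega
  have hneg : quadraticChar F (-1) = 1 := by
    rw [quadraticChar_one_iff_isSquare (by norm_num : (-1 : F) ≠ 0)]
    rw [FiniteField.isSquare_neg_one_iff]
    omega
  set q : ℕ := Fintype.card F with hqdef
  -- entry description via the quadratic character
  set χ : F → ℝ := fun a => ((quadraticChar F a : ℤ) : ℝ) with hχ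
  have hf : ∀ k l : F, A k l = (1 + χ (k - l) - (if k = l then 1 else 0)) / 2 := by
    intro k l
    rw [hA]
    simp only [Matrix.of_apply, hχ]
    rcases eq_or_ne k l with rfl | hkl
    · simp
    · have hkl' : k - l ≠ 0 := sub_ne_zero.mpr hkl
      rw [if_neg hkl]
      by_cases hs : IsSquare (k - l)
      · rw [if_pos ⟨hkl, hs⟩, (quadraticChar_one_iff_isSquare hkl').mpr hs]
        norm_num
      · rw [if_neg (by tauto), quadraticChar_neg_one_iff_not_isSquare.mpr hs]
        norm_num
  have hkey : ∀ c : F, ∑ x : F, χ x * χ (c - x)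
      = if c = 0 then (q : ℝ) - 1 else -1 := by
    intro c
    have := paley_key_sum F hF hneg c
    have hcast : ((∑ x : F, quadraticChar F x * quadraticChar F (c - x) : ℤ) : ℝ)
        = ∑ x : F, χ x * χ (c - x) := by
      push_cast [hχ]; rfl
    rw [← hcast, this]
    split <;> push_cast <;> ring
  have hsum1 : ∀ l : F, ∑ m : F, χ (m - l) = 0 := by
    intro l
    have : ∑ m : F, χ (m - l) = ∑ a : F, χ a :=
      Fintype.sum_equiv (Equiv.subRight l) _ _ fun m => rfl
    rw [this, hχ]
    rw [show ∑ a : F, ((quadraticChar F a : ℤ) : ℝ)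
        = ((∑ a : F, quadraticChar F a : ℤ) : ℝ) by push_cast; rfl]
    rw [quadraticChar_sum_zero hF]; norm_num
  have hsum2 : ∀ k : F, ∑ m : F, χ (k - m) = 0 := by
    intro k
    have : ∑ m : F, χ (k - m) = ∑ a : F, χ a :=
      Fintype.sum_equiv (Equiv.subLeft k) _ _ fun m => rfl
    rw [this, hχ]
    rw [show ∑ a : F, ((quadraticChar F a : ℤ) : ℝ)
        = ((∑ a : F, quadraticChar F a : ℤ) : ℝ) by push_cast; rfl]
    rw [quadraticChar_sum_zero hF]; norm_num
  ext k l
  rw [pow_two, Matrix.mul_apply]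
  have hrhs : ((((q : ℝ) - 1) / 4) •
      (Matrix.of (fun _ _ : F => (1 : ℝ)) + (1 : Matrix F F ℝ)) - A) k l
      = ((q : ℝ) - 1) / 4 * (1 + if k = l then 1 else 0) - A k l := by
    simp [Matrix.one_apply, Matrix.smul_apply, mul_add]
  rw [hrhs, hf k l]
  have hterm : ∀ m : F, A k m * A m l =
      (1 + χ (k - m) - (if k = m then 1 else 0))
        * (1 + χ (m - l) - (if m = l then 1 else 0)) / 4 := by
    intro m
    rw [hf k m, hf m l]; ring
  rw [Finset.sum_congr rfl fun m _ => hterm m]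
  have hexp : ∀ m : F,
      (1 + χ (k - m) - (if k = m then 1 else 0))
        * (1 + χ (m - l) - (if m = l then 1 else 0)) / 4
      = (1 + χ (m - l) - (if m = l then 1 else 0)
          + χ (k - m) + χ (k - m) * χ (m - l) - χ (k - m) * (if m = l then 1 else 0)
          - (if k = m then 1 else 0) - (if k = m then 1 else 0) * χ (m - l)
          + (if k = m then 1 else 0) * (if m = l then 1 else 0)) / 4 := by
    intro m; ring
  rw [Finset.sum_congr rfl fun m _ => hexp m]
  have h5 : ∑ m : F, χ (k - m) * χ (m - l)
      = if k = l then (q : ℝ) - 1 else -1 := by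
    have hre : ∑ m : F, χ (k - m) * χ (m - l)
        = ∑ x : F, χ x * χ ((k - l) - x) := by
      refine Fintype.sum_equiv (Equiv.subLeft k) _ _ fun x => ?_
      simp only [Equiv.subLeft_apply]
      congr 1
      ring
    rw [hre, hkey (k - l)]
    congr 1
    simp [sub_eq_zero]
  have h6 : ∑ m : F, χ (k - m) * (if m = l then 1 else 0) = χ (k - l) := by
    rw [show (fun m => χ (k - m) * (if m = l then (1:ℝ) else 0))
        = fun m => if m = l then χ (k - m) else 0 by
      funext m; split <;> simp_all]
    rw [Finset.sum_ite_eq' Finset.univ l (fun m => χ (k - m))]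
    simp
  have h8 : ∑ m : F, (if k = m then 1 else 0) * χ (m - l) = χ (k - l) := by
    rw [show (fun m => (if k = m then (1:ℝ) else 0) * χ (m - l))
        = fun m => if k = m then χ (m - l) else 0 by
      funext m; split <;> simp_all]
    rw [Finset.sum_ite_eq Finset.univ k (fun m => χ (m - l))]
    simp
  have h3 : ∑ m : F, (if m = l then (1:ℝ) else 0) = 1 := by simp
  have h7 : ∑ m : F, (if k = m then (1:ℝ) else 0) = 1 := by simp
  have h9 : ∑ m : F, (if k = m then (1:ℝ) else 0) * (if m = l then 1 else 0)
      = if k = l then 1 else 0 := by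
    rw [show (fun m => (if k = m then (1:ℝ) else 0) * (if m = l then (1:ℝ) else 0))
        = fun m => if k = m then (if m = l then (1:ℝ) else 0) else 0 by
      funext m; split <;> simp_all]
    rw [Finset.sum_ite_eq Finset.univ k (fun m => if m = l then (1:ℝ) else 0)]
    simp
  have hχ0 : χ (0 : F) = 0 := by simp [hχ]
  rw [← Finset.sum_div]
  simp only [Finset.sum_add_distrib, Finset.sum_sub_distrib,
    hsum1 l, hsum2 k, h5, h6, h8, h3, h7, h9, Finset.sum_const, Finset.card_univ,
    nsmul_eq_mul]
  rcases eq_or_ne k l with rfl | hkl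
  · simp only [if_pos rfl, sub_self, hχ0, eq_self_iff_true, if_true]
    ring
  · simp only [if_neg hkl]
    ring
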